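/- Under the linearized symmetry condition η_x + (η_y − ξ_x)ω − ξ_y·ω² = ξ·ω_x + η·ω_y with the ansatz ξ = α (constant), η = Γ·y + γ (Γ, γ constants), and ω(x,y) = β(x,y)/(p + r·β(x,y)) for the Schottky β, one must have Γ = 0 and α = r·γ, provided b ≠ c, b,c > 0, p > 0, r > 0. -/

import Mathlib

theorem lsc_forces_translation_ansatz1
    (b c p r : ℝ) (hb : 0 < b) (hc : 0 < c) (hbc : b ≠ c) (hp : 0 < p) (hr : 0 < r)
    (β ω : ℝ → ℝ → ℝ)
    (hβ : ∀ x y, β x y = ((b - c) * Real.exp (-b * (x - y * r)) + c) * Real.exp (c * (x - y * r)))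
    (hω : ∀ x y, ω x y = β x y / (p + r * β x y))
    (α Γ γ : ℝ) (hnz : (α, Γ, γ) ≠ (0, 0, 0))
    (ξ η : ℝ → ℝ → ℝ)
    (hξ : ∀ x y, ξ x y = α)
    (hη : ∀ x y, η x y = Γ * y + γ)
    (hlsc : ∀ x y,
      deriv (fun t => η t y) x
        + (deriv (fun t => η x t) y - deriv (fun t => ξ t y) x) * ω x y
        - deriv (fun t => ξ x t) y * (ω x y) ^ 2
      = ξ x y * deriv (fun t => ω t y) x + η x y * deriv (fun t => ω x t) y) :
    Γ = 0 ∧ α = r * γ := by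
  set g : ℝ → ℝ := fun u => ((b - c) * Real.exp (-b * u) + c) * Real.exp (c * u) with hg
  set gd : ℝ → ℝ := fun u =>
    (b - c) * (c - b) * (Real.exp (-b * u) * Real.exp (c * u)) + c ^ 2 * Real.exp (c * u)
    with hgdDef
  -- derivative of g
  have hgd : ∀ u : ℝ, HasDerivAt g (gd u) u := by
    intro u
    have h1 : HasDerivAt (fun u : ℝ => Real.exp (-b * u)) (Real.exp (-b * u) * (-b * 1)) u :=
      ((hasDerivAt_id u).const_mul (-b)).exp
    have h2 : HasDerivAt (fun u : ℝ => (b - c) * Real.exp (-b * u) + c)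
        ((b - c) * (Real.exp (-b * u) * (-b * 1))) u := (h1.const_mul (b - c)).add_const c
    have h3 : HasDerivAt (fun u : ℝ => Real.exp (c * u)) (Real.exp (c * u) * (c * 1)) u :=
      ((hasDerivAt_id u).const_mul c).exp
    have h4 : HasDerivAt g _ u := h2.mul h3
    convert h4 using 1
    simp only [hgdDef]
    ring
  -- positivity of g on nonneg u
  have hgpos : ∀ u : ℝ, 0 ≤ u → 0 < g u := by
    intro u hu
    have he1 : Real.exp (-b * u) ≤ 1 := by
      apply Real.exp_le_one_iff.mpr
      nlinarith
    have he2 : (0 : ℝ) < Real.exp (-b * u) := Real.exp_pos _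
    have he3 : (0 : ℝ) < Real.exp (c * u) := Real.exp_pos _
    have hinner : 0 < (b - c) * Real.exp (-b * u) + c := by
      rcases le_or_gt c b with h | h
      · nlinarith
      · nlinarith [mul_nonneg (sub_nonneg.mpr h.le) (sub_nonneg.mpr he1)]
    simp only [hg]
    positivity
  -- key pointwise identity
  have key : ∀ u y : ℝ, p + r * g u ≠ 0 →
      Γ * (g u / (p + r * g u)) =
        (α - r * (Γ * y + γ)) * (p * gd u / (p + r * g u) ^ 2) := by
    intro u y hden
    set x : ℝ := u + y * r with hx
    have hxy : x - y * r = u := by rw [hx]; ring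
    -- the simple derivatives
    have e1 : deriv (fun t => η t y) x = 0 := by
      have : (fun t => η t y) = fun _ => Γ * y + γ := funext fun t => hη t y
      rw [this]; exact deriv_const _ _
    have e2 : deriv (fun t => η x t) y = Γ := by
      have : (fun t => η x t) = fun t => Γ * t + γ := funext fun t => hη x t
      rw [this]
      have := (((hasDerivAt_id y).const_mul Γ).add_const γ).deriv
      simpa using this
    have e3 : deriv (fun t => ξ t y) x = 0 := by
      have : (fun t => ξ t y) = fun _ => α := funext fun t => hξ t y
      rw [this]; exact deriv_const _ _
    have e4 : deriv (fun t => ξ x t) y = 0 := by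
      have : (fun t => ξ x t) = fun _ => α := funext fun t => hξ x t
      rw [this]; exact deriv_const _ _
    -- ω as a function of u
    have hfun1 : (fun t => ω t y) = fun t => g (t - y * r) / (p + r * g (t - y * r)) := by
      funext t; rw [hω, hβ]
    have hfun2 : (fun t => ω x t) = fun t => g (x - t * r) / (p + r * g (x - t * r)) := by
      funext t; rw [hω, hβ]
    have hden' : p + r * g (x - y * r) ≠ 0 := by rw [hxy]; exact hden
    have hgu : HasDerivAt g (gd u) (x - y * r) := by rw [hxy]; exact hgd u
    -- x-derivative of ω
    have hωx : deriv (fun t => ω t y) x = p * gd u / (p + r * g u) ^ 2 := by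
      rw [hfun1]
      have hinner : HasDerivAt (fun t : ℝ => t - y * r) 1 x := (hasDerivAt_id x).sub_const _
      have hN : HasDerivAt (fun t : ℝ => g (t - y * r)) (gd u * 1) x := by
        have := hgu.comp x hinner; exact this
      have hD : HasDerivAt (fun t : ℝ => p + r * g (t - y * r)) (r * (gd u * 1)) x :=
        (hN.const_mul r).const_add p
      have hq : HasDerivAt (fun t : ℝ => g (t - y * r) / (p + r * g (t - y * r))) _ x :=
        hN.div hD hden'
      rw [hq.deriv, hxy]
      ring
    -- y-derivative of ω
    have hωy : deriv (fun t => ω x t) y = -r * (p * gd u) / (p + r * g u) ^ 2 := by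
      rw [hfun2]
      have hinner : HasDerivAt (fun t : ℝ => x - t * r) (-(1 * r)) y :=
        ((hasDerivAt_id y).mul_const r).const_sub x
      have hgu2 : HasDerivAt g (gd u) (x - y * r) := hgu
      have hN : HasDerivAt (fun t : ℝ => g (x - t * r)) (gd u * -(1 * r)) y :=
        by have := hgu2.comp y hinner; exact this
      have hD : HasDerivAt (fun t : ℝ => p + r * g (x - t * r)) (r * (gd u * -(1 * r))) y :=
        (hN.const_mul r).const_add p
      have hq : HasDerivAt (fun t : ℝ => g (x - t * r) / (p + r * g (x - t * r))) _ y :=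
        hN.div hD hden'
      rw [hq.deriv, hxy]
      ring
    have hωval : ω x y = g u / (p + r * g u) := by
      rw [hω, hβ, ← hxy]
    have H := hlsc x y
    rw [e1, e2, e3, e4, hωx, hωy, hωval, hξ, hη] at H
    have hden2 : (p + r * g u) ^ 2 ≠ 0 := pow_ne_zero _ hden
    field_simp at H ⊢
    linear_combination H
  -- find a good point u
  obtain ⟨u, hu0, hgdu⟩ : ∃ u : ℝ, 0 ≤ u ∧ gd u ≠ 0 := by
    by_cases hA : c ^ 2 - (b - c) ^ 2 = 0
    · -- then b = 2 c
      have hb2 : b = 2 * c := by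
        have : (b - 2 * c) * b = 0 := by ring_nf; nlinarith [hA]
        rcases mul_eq_zero.mp this with h | h
        · linarith
        · exfalso; exact hb.ne' h
      refine ⟨1, zero_le_one, ?_⟩
      simp only [hgdDef, hb2]
      have h1 : Real.exp (-(2 * c) * 1) < 1 := by
        apply Real.exp_lt_one_iff.mpr; nlinarith
      have h2 : (0 : ℝ) < c ^ 2 := by positivity
      have h3 : (0 : ℝ) < Real.exp (c * 1) := Real.exp_pos _
      have h4 : (0 : ℝ) < Real.exp (-(2 * c) * 1) := Real.exp_pos _
      nlinarith [mul_pos (mul_pos h2 h3) (sub_pos.mpr h1)]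
    · refine ⟨0, le_refl 0, ?_⟩
      simp only [hgdDef, mul_zero, neg_mul, neg_zero, Real.exp_zero, mul_one, one_mul]
      intro h
      apply hA
      nlinarith [h]
  have hdenpos : 0 < p + r * g u := by
    have := hgpos u hu0
    positivity
  have hden : p + r * g u ≠ 0 := hdenpos.ne'
  have E0 := key u 0 hden
  have E1 := key u 1 hden
  have hD0 : p * gd u / (p + r * g u) ^ 2 ≠ 0 :=
    div_ne_zero (mul_ne_zero hp.ne' hgdu) (pow_ne_zero _ hden)
  have hΓD : r * Γ * (p * gd u / (p + r * g u) ^ 2) = 0 := by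
    linear_combination E1 - E0
  have hΓ : Γ = 0 := by
    rcases mul_eq_zero.mp hΓD with h | h
    · rcases mul_eq_zero.mp h with h' | h'
      · exact absurd h' hr.ne'
      · exact h'
    · exact absurd h hD0
  refine ⟨hΓ, ?_⟩
  rw [hΓ] at E0
  simp only [zero_mul, mul_zero, zero_add] at E0
  have : (α - r * γ) * (p * gd u / (p + r * g u) ^ 2) = 0 := by linear_combination -E0
  rcases mul_eq_zero.mp this with h | h
  · linarith
  · exact absurd h hD0
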